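/- Let y* ∈ [2,3], z₀ ∈ [0,1), and let (ρ, ω) be an inner LP-type solution on (z₀, 1]. (a) If inf_{z ∈ (z₀,1)} ω(z) ≤ 1/3, then ρ(z) > ω(z) for all z ∈ (z₀, 1). (b) If moreover z₁ ∈ (z₀, 1) satisfies ω(z₁) = 1/3 and ω(z) > 1/3 for all z ∈ (z₁, 1), then ω(z) < 1/3 for all z ∈ (z₀, z₁). -/

import Mathlib

open Set Filter Topology Real


/-- The rescaled self-similar isothermal Euler–Poisson system with parameter `y = y*`,
at the point `z`. -/
def EPSys (y : ℝ) (ρ ω : ℝ → ℝ) (z : ℝ) : Prop :=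
  deriv ρ z =
    -(2 * y ^ 2 * z * ω z * ρ z * (ρ z - ω z)) / (1 - y ^ 2 * z ^ 2 * (ω z) ^ 2) ∧
  deriv ω z =
    (1 - 3 * ω z) / z +
      2 * y ^ 2 * z * (ω z) ^ 2 * (ρ z - ω z) / (1 - y ^ 2 * z ^ 2 * (ω z) ^ 2)

/-- The multiplied form of the system, valid also at the sonic point. -/
def MultSys (y : ℝ) (ρ ω : ℝ → ℝ) (z : ℝ) : Prop :=
  deriv ρ z * (1 - y ^ 2 * z ^ 2 * (ω z) ^ 2)
    + 2 * y ^ 2 * z * ω z * ρ z * (ρ z - ω z) = 0 ∧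
  z * deriv ω z * (1 - y ^ 2 * z ^ 2 * (ω z) ^ 2)
    - (1 - 3 * ω z) * (1 - y ^ 2 * z ^ 2 * (ω z) ^ 2)
    - 2 * y ^ 2 * z ^ 2 * (ω z) ^ 2 * (ρ z - ω z) = 0

/-- An inner LP-type solution on `(z₀, 1]`: continuous on `(z₀,1]`, real analytic on a
left-neighbourhood of `z = 1` where it solves the multiplied system with the LP
conditions, differentiable on `(z₀,1)` where it solves the system, and subsonic there. -/
def InnerLPSol (y z₀ : ℝ) (ρ ω : ℝ → ℝ) : Prop :=
  ContinuousOn ρ (Set.Ioc z₀ 1) ∧ ContinuousOn ω (Set.Ioc z₀ 1) ∧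
  (∃ r : ℝ, 0 < r ∧ r < 1 ∧
    AnalyticOnNhd ℝ ρ (Set.Ioc (1 - r) 1) ∧
    AnalyticOnNhd ℝ ω (Set.Ioc (1 - r) 1) ∧
    (∀ z ∈ Set.Ioc (1 - r) 1, MultSys y ρ ω z)) ∧
  ρ 1 = 1 / y ∧ ω 1 = 1 / y ∧ deriv ρ 1 = -(1 / y) ∧ deriv ω 1 = 1 - 2 / y ∧
  (∀ z ∈ Set.Ioo z₀ 1,
    DifferentiableAt ℝ ρ z ∧ DifferentiableAt ℝ ω z ∧ EPSys y ρ ω z) ∧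
  (∀ z ∈ Set.Ioo z₀ 1, 0 < 1 - y ^ 2 * z ^ 2 * (ω z) ^ 2)

/- helpers -/
lemma slope_tendsto' {g : ℝ → ℝ} {x c : ℝ} (hg : HasDerivAt g c x) :
    Tendsto (slope g x) (𝓝[≠] x) (𝓝 c) :=
  hasDerivAt_iff_tendsto_slope.mp hg

lemma ev_left_gt {g : ℝ → ℝ} {x c : ℝ} (hg : HasDerivAt g c x) (hc : c < 0) :
    ∀ᶠ z in 𝓝[<] x, g x < g z := by
  have h1 : Tendsto (slope g x) (𝓝[<] x) (𝓝 c) :=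
    (slope_tendsto' hg).mono_left (nhdsWithin_mono x fun z hz => ne_of_lt hz)
  have h2 : ∀ᶠ z in 𝓝[<] x, slope g x z < 0 := h1.eventually_lt_const hc
  filter_upwards [h2, self_mem_nhdsWithin] with z hz hzx
  rw [slope_def_field, div_neg_iff] at hz
  rcases hz with ⟨h3, _⟩ | ⟨_, h4⟩
  · linarith [h3]
  · exact absurd h4 (by simp at hzx; linarith)

lemma ev_left_lt {g : ℝ → ℝ} {x c : ℝ} (hg : HasDerivAt g c x) (hc : 0 < c) :
    ∀ᶠ z in 𝓝[<] x, g z < g x := by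
  have := ev_left_gt (g := fun z => -g z) (hg.neg) (by linarith)
  filter_upwards [this] with z hz; simpa using hz

lemma deriv_nonneg_of_min_right {g : ℝ → ℝ} {x c : ℝ} (hg : HasDerivAt g c x)
    (h : ∀ᶠ z in 𝓝[>] x, g x ≤ g z) : 0 ≤ c := by
  have h1 : Tendsto (slope g x) (𝓝[>] x) (𝓝 c) :=
    (slope_tendsto' hg).mono_left (nhdsWithin_mono x fun z hz => ne_of_gt hz)
  refine ge_of_tendsto h1 ?_
  filter_upwards [h, self_mem_nhdsWithin] with z hz hzx
  rw [slope_def_field]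
  have : (0:ℝ) < z - x := by simp at hzx; linarith
  exact div_nonneg (by linarith) this.le

lemma deriv_nonpos_of_max_right {g : ℝ → ℝ} {x c : ℝ} (hg : HasDerivAt g c x)
    (h : ∀ᶠ z in 𝓝[>] x, g z ≤ g x) : c ≤ 0 := by
  have := deriv_nonneg_of_min_right (g := fun z => -g z) hg.neg
    (by filter_upwards [h] with z hz; simpa using hz)
  linarith

lemma deriv_nonpos_of_min_left {g : ℝ → ℝ} {x c : ℝ} (hg : HasDerivAt g c x)
    (h : ∀ᶠ z in 𝓝[<] x, g x ≤ g z) : c ≤ 0 := by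
  have h1 : Tendsto (slope g x) (𝓝[<] x) (𝓝 c) :=
    (slope_tendsto' hg).mono_left (nhdsWithin_mono x fun z hz => ne_of_lt hz)
  refine le_of_tendsto h1 ?_
  filter_upwards [h, self_mem_nhdsWithin] with z hz hzx
  rw [slope_def_field]
  have hlt : z - x < 0 := by simp at hzx; linarith
  exact div_nonpos_of_nonneg_of_nonpos (by linarith) hlt.le

lemma le_of_right_lim {g : ℝ → ℝ} {x c : ℝ} (hg : ContinuousAt g x)
    (h : ∀ᶠ z in 𝓝[>] x, c ≤ g z) : c ≤ g x :=
  ge_of_tendsto (hg.continuousWithinAt.tendsto) h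

lemma ge_of_right_lim {g : ℝ → ℝ} {x c : ℝ} (hg : ContinuousAt g x)
    (h : ∀ᶠ z in 𝓝[>] x, g z ≤ c) : g x ≤ c :=
  le_of_tendsto (hg.continuousWithinAt.tendsto) h

lemma ge_of_left_lim {g : ℝ → ℝ} {x c : ℝ} (hg : ContinuousAt g x)
    (h : ∀ᶠ z in 𝓝[<] x, c ≤ g z) : c ≤ g x :=
  ge_of_tendsto (hg.continuousWithinAt.tendsto) h

/- derivative formulas -/
lemma lp_cross_deriv {y z₀ : ℝ} {ρ ω : ℝ → ℝ} (h : InnerLPSol y z₀ ρ ω)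
    {z : ℝ} (hz : z ∈ Set.Ioo z₀ 1) (hcross : ρ z = ω z) :
    deriv ρ z = 0 ∧ deriv ω z = (1 - 3 * ω z) / z := by
  obtain ⟨-, -, -, -, -, -, -, hdiff, -⟩ := h
  obtain ⟨-, -, hE⟩ := hdiff z hz
  obtain ⟨hE1, hE2⟩ := hE
  constructor
  · rw [hE1, hcross]; simp
  · rw [hE2, hcross]; simp

lemma lp_domega_pos {y z₀ : ℝ} {ρ ω : ℝ → ℝ} (hy : 2 ≤ y) (hz₀ : 0 ≤ z₀)
    (h : InnerLPSol y z₀ ρ ω) {z : ℝ} (hz : z ∈ Set.Ioo z₀ 1) (hω : ω z = 1/3)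
    (hρ : ω z < ρ z) : 0 < deriv ω z := by
  obtain ⟨-, -, -, -, -, -, -, hdiff, hsub⟩ := h
  obtain ⟨-, -, hE⟩ := hdiff z hz
  obtain ⟨-, hE2⟩ := hE
  have hD := hsub z hz
  have hz0 : 0 < z := lt_of_le_of_lt hz₀ hz.1
  rw [hE2]
  have h1 : (1 - 3*ω z)/z = 0 := by rw [hω]; norm_num
  rw [h1, zero_add]
  apply div_pos _ hD
  have hy2 : (0:ℝ) < y^2 := by positivity
  have hf : 0 < ρ z - ω z := by linarith
  have hω2 : (0:ℝ) < (ω z)^2 := by rw [hω]; norm_num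
  have := mul_pos (mul_pos (mul_pos (mul_pos (by norm_num : (0:ℝ) < 2) hy2) hz0) hω2) hf
  linarith [this]

lemma lp_domega_neg {y z₀ : ℝ} {ρ ω : ℝ → ℝ} (hy : 2 ≤ y) (hz₀ : 0 ≤ z₀)
    (h : InnerLPSol y z₀ ρ ω) {z : ℝ} (hz : z ∈ Set.Ioo z₀ 1) (hω : ω z = 1/3)
    (hρ : ρ z < ω z) : deriv ω z < 0 := by
  obtain ⟨-, -, -, -, -, -, -, hdiff, hsub⟩ := h
  obtain ⟨-, -, hE⟩ := hdiff z hz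
  obtain ⟨-, hE2⟩ := hE
  have hD := hsub z hz
  have hz0 : 0 < z := lt_of_le_of_lt hz₀ hz.1
  rw [hE2]
  have h1 : (1 - 3*ω z)/z = 0 := by rw [hω]; norm_num
  rw [h1, zero_add]
  apply div_neg_of_neg_of_pos _ hD
  have hy2 : (0:ℝ) < y^2 := by positivity
  have hf : ρ z - ω z < 0 := by linarith
  have hω2 : (0:ℝ) < (ω z)^2 := by rw [hω]; norm_num
  have := mul_pos (mul_pos (mul_pos (by norm_num : (0:ℝ) < 2) hy2) hz0) hω2
  nlinarith [this]
lemma lp_gronwall {y z₀ : ℝ} {ρ ω : ℝ → ℝ} (hz₀ : 0 ≤ z₀)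
    (h : InnerLPSol y z₀ ρ ω) {p q : ℝ} (hzp : z₀ < p) (hpq : p < q) (hq1 : q < 1)
    (hfp : ρ p = ω p) (hωp : ω p = 1/3) : ∀ t ∈ Set.Icc p q, ρ t = ω t := by
  obtain ⟨hρc, hωc, -, -, -, -, -, hdiff, hsub⟩ := h
  have hp0 : 0 < p := lt_of_le_of_lt hz₀ hzp
  have hIoc : Set.Icc p q ⊆ Set.Ioc z₀ 1 := fun t ht =>
    ⟨lt_of_lt_of_le hzp ht.1, le_trans ht.2 hq1.le⟩
  have hIoo : Set.Icc p q ⊆ Set.Ioo z₀ 1 := fun t ht =>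
    ⟨lt_of_lt_of_le hzp ht.1, lt_of_le_of_lt ht.2 hq1⟩
  set D : ℝ → ℝ := fun t => 1 - y^2*t^2*(ω t)^2 with hD
  set A : ℝ → ℝ := fun t => -(2*y^2*t*ω t*(ρ t + ω t)) / D t with hA
  set B : ℝ → ℝ := fun t => 6*y^2*t*(ω t)^2 / D t with hB
  -- the identities
  have hident : ∀ t ∈ Set.Ioo z₀ 1,
      deriv ρ t - deriv ω t = A t * (ρ t - ω t) + (3*ω t - 1) * (1/t) ∧
      3 * deriv ω t = B t * (ρ t - ω t) + (3*ω t - 1) * (-(3/t)) := by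
    intro t ht
    obtain ⟨-, -, hE1, hE2⟩ := hdiff t ht
    have hDpos : 0 < D t := hsub t ht
    have hDne : D t ≠ 0 := hDpos.ne'
    have htne : t ≠ 0 := (lt_of_le_of_lt hz₀ ht.1).ne'
    constructor
    · rw [hE1, hE2, hA]
      show _ = -(2*y^2*t*ω t*(ρ t + ω t)) / D t * (ρ t - ω t) + (3*ω t - 1) * (1/t)
      rw [hD]
      field_simp
      ring
    · rw [hE2, hB]
      show _ = 6*y^2*t*(ω t)^2 / D t * (ρ t - ω t) + (3*ω t - 1) * (-(3/t))
      rw [hD]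
      field_simp
      ring
  -- continuity of coefficients
  have hρcont : ContinuousOn ρ (Set.Icc p q) := hρc.mono hIoc
  have hωcont : ContinuousOn ω (Set.Icc p q) := hωc.mono hIoc
  have hDcont : ContinuousOn D (Set.Icc p q) := by
    rw [hD]; fun_prop
  have hDne : ∀ t ∈ Set.Icc p q, D t ≠ 0 := fun t ht => (hsub t (hIoo ht)).ne'
  have htne : ∀ t ∈ Set.Icc p q, t ≠ 0 := fun t ht => (lt_of_lt_of_le hp0 ht.1).ne'
  set g : ℝ → ℝ := fun t => (|A t| + |1/t|) + (|B t| + |3/t|) with hg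
  have hAcont : ContinuousOn A (Set.Icc p q) := by
    rw [hA]
    exact (((((continuousOn_const.mul continuousOn_id).mul hωcont).mul
      (hρcont.add hωcont)).neg).div hDcont hDne)
  have hBcont : ContinuousOn B (Set.Icc p q) := by
    rw [hB]
    exact (((continuousOn_const.mul continuousOn_id).mul (hωcont.pow 2)).div hDcont hDne)
  have hinvcont : ContinuousOn (fun t : ℝ => 1/t) (Set.Icc p q) :=
    continuousOn_const.div continuousOn_id htne
  have h3invcont : ContinuousOn (fun t : ℝ => 3/t) (Set.Icc p q) :=
    continuousOn_const.div continuousOn_id htne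
  have hgcont : ContinuousOn g (Set.Icc p q) := by
    rw [hg]
    exact ((hAcont.abs.add hinvcont.abs).add (hBcont.abs.add h3invcont.abs))
  obtain ⟨K, hK⟩ := isCompact_Icc.exists_bound_of_continuousOn hgcont
  have hKbd : ∀ t ∈ Set.Icc p q, (|A t| + |1/t|) ≤ K ∧ (|B t| + |3/t|) ≤ K := by
    intro t ht
    have h1 := hK t ht
    rw [Real.norm_eq_abs] at h1
    have hb : (|A t| + |1/t|) + (|B t| + |3/t|) ≤ K := le_trans (le_abs_self _) h1
    constructor <;> nlinarith [abs_nonneg (A t), abs_nonneg (B t), abs_nonneg (1/t), abs_nonneg (3/t)]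
  -- the vector function
  set F : ℝ → ℝ × ℝ := fun t => (ρ t - ω t, 3*ω t - 1) with hF
  set F' : ℝ → ℝ × ℝ := fun t => (deriv ρ t - deriv ω t, 3*deriv ω t) with hF'
  have hFc : ContinuousOn F (Set.Icc p q) :=
    ContinuousOn.prodMk (hρcont.sub hωcont) ((continuousOn_const.mul hωcont).sub continuousOn_const)
  have hFd : ∀ t ∈ Set.Ico p q, HasDerivWithinAt F (F' t) (Set.Ici t) t := by
    intro t ht
    have htIoo : t ∈ Set.Ioo z₀ 1 := hIoo ⟨ht.1, ht.2.le⟩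
    obtain ⟨hρd, hωd, -⟩ := hdiff t htIoo
    have h1 : HasDerivAt (fun t => ρ t - ω t) (deriv ρ t - deriv ω t) t :=
      (hρd.hasDerivAt).sub (hωd.hasDerivAt)
    have h2 : HasDerivAt (fun t => 3 * ω t - 1) (3 * deriv ω t) t :=
      ((hωd.hasDerivAt).const_mul 3).sub_const 1
    exact (h1.prodMk h2).hasDerivWithinAt
  have hbound : ∀ t ∈ Set.Ico p q, ‖F' t‖ ≤ K * ‖F t‖ + 0 := by
    intro t ht
    have htIcc : t ∈ Set.Icc p q := ⟨ht.1, ht.2.le⟩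
    have htIoo : t ∈ Set.Ioo z₀ 1 := hIoo htIcc
    obtain ⟨hid1, hid2⟩ := hident t htIoo
    obtain ⟨hK1, hK2⟩ := hKbd t htIcc
    have hf1 : |ρ t - ω t| ≤ ‖F t‖ := by
      rw [hF, Prod.norm_def]
      exact le_max_of_le_left (le_of_eq (Real.norm_eq_abs _).symm)
    have hf2 : |3*ω t - 1| ≤ ‖F t‖ := by
      rw [hF, Prod.norm_def]
      exact le_max_of_le_right (le_of_eq (Real.norm_eq_abs _).symm)
    have hm0 : 0 ≤ ‖F t‖ := norm_nonneg _
    have hb1 : |deriv ρ t - deriv ω t| ≤ K * ‖F t‖ := by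
      rw [hid1]
      calc |A t * (ρ t - ω t) + (3*ω t - 1) * (1/t)|
          ≤ |A t| * |ρ t - ω t| + |1/t| * |3*ω t - 1| := by
            refine (abs_add_le _ _).trans ?_
            rw [abs_mul, abs_mul]
            rw [mul_comm |3*ω t - 1| _]
        _ ≤ |A t| * ‖F t‖ + |1/t| * ‖F t‖ := by
            exact add_le_add (mul_le_mul_of_nonneg_left hf1 (abs_nonneg _))
              (mul_le_mul_of_nonneg_left hf2 (abs_nonneg _))
        _ = (|A t| + |1/t|) * ‖F t‖ := by ring
        _ ≤ K * ‖F t‖ := mul_le_mul_of_nonneg_right hK1 hm0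
    have hb2 : |3 * deriv ω t| ≤ K * ‖F t‖ := by
      rw [hid2]
      calc |B t * (ρ t - ω t) + (3*ω t - 1) * (-(3/t))|
          ≤ |B t| * |ρ t - ω t| + |3/t| * |3*ω t - 1| := by
            refine (abs_add_le _ _).trans ?_
            rw [abs_mul, abs_mul, abs_neg]
            rw [mul_comm |3*ω t - 1| _]
        _ ≤ |B t| * ‖F t‖ + |3/t| * ‖F t‖ := by
            exact add_le_add (mul_le_mul_of_nonneg_left hf1 (abs_nonneg _))
              (mul_le_mul_of_nonneg_left hf2 (abs_nonneg _))
        _ = (|B t| + |3/t|) * ‖F t‖ := by ring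
        _ ≤ K * ‖F t‖ := mul_le_mul_of_nonneg_right hK2 hm0
    rw [hF', Prod.norm_def, add_zero]
    simp only [Real.norm_eq_abs]
    exact max_le hb1 hb2
  have hFp : ‖F p‖ ≤ 0 := by
    have : F p = 0 := by
      rw [hF]
      simp only [Prod.mk_eq_zero]
      constructor
      · rw [hfp]; ring
      · rw [hωp]; norm_num
    rw [this, norm_zero]
  have hmain := norm_le_gronwallBound_of_norm_deriv_right_le hFc hFd hFp hbound
  intro t ht
  have h1 := hmain t ht
  rw [gronwallBound_ε0] at h1
  simp only [zero_mul] at h1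
  have h2 : F t = 0 := norm_le_zero_iff.mp h1
  rw [hF] at h2
  have h3 : ρ t - ω t = 0 := by
    have := congrArg Prod.fst h2
    simpa using this
  linarith

set_option maxHeartbeats 1600000 in
lemma lp_partA {y z₀ : ℝ} {ρ ω : ℝ → ℝ} (hy : y ∈ Set.Icc (2:ℝ) 3)
    (hz₀ : z₀ ∈ Set.Ico (0:ℝ) 1) (h : InnerLPSol y z₀ ρ ω)
    (Hinf : ∀ ε : ℝ, 0 < ε → ∃ z ∈ Set.Ioo z₀ 1, ω z < 1/3 + ε) :
    ∀ z ∈ Set.Ioo z₀ 1, ω z < ρ z := by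
  obtain ⟨hy2, hy3⟩ := hy
  obtain ⟨hz₀0, hz₀1⟩ := hz₀
  have hy0 : 0 < y := by linarith
  obtain ⟨hρc, hωc, ⟨r, hr0, hr1, hρa, hωa, -⟩, hρ1, hω1, hdρ1, hdω1, hdiff, hsub⟩ := id h
  -- Step A : ρ - ω > 0 near 1
  have h1mem : (1:ℝ) ∈ Set.Ioc (1 - r) 1 := ⟨by linarith, le_refl 1⟩
  have hρd1 : DifferentiableAt ℝ ρ 1 := (hρa 1 h1mem).differentiableAt
  have hωd1 : DifferentiableAt ℝ ω 1 := (hωa 1 h1mem).differentiableAt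
  have hfd1 : HasDerivAt (fun t => ρ t - ω t) (1/y - 1 * 2⁻¹ * 2) 1 := by
    have := (hρd1.hasDerivAt).sub (hωd1.hasDerivAt)
    rw [hdρ1, hdω1] at this
    refine this.congr_deriv ?_
    ring
  have hc : 1/y - 1 * 2⁻¹ * 2 < 0 := by
    have h12 : 1/y ≤ 1/2 := by rw [div_le_div_iff₀] <;> linarith
    linarith
  have hf1 : ρ 1 - ω 1 = 0 := by rw [hρ1, hω1]; ring
  have hevA := ev_left_gt hfd1 hc
  obtain ⟨l, hl, hsubA⟩ := mem_nhdsLT_iff_exists_Ioo_subset.mp hevA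
  set c₁ : ℝ := max l z₀ with hc₁def
  have hc₁1 : c₁ < 1 := max_lt hl hz₀1
  have hfpos1 : ∀ z ∈ Set.Ioo c₁ 1, 0 < ρ z - ω z := by
    intro z hz
    have := hsubA ⟨lt_of_le_of_lt (le_max_left l z₀) hz.1, hz.2⟩
    simp only [Set.mem_setOf_eq] at this
    linarith [hf1, this]
  -- Step B : suppose a crossing exists
  by_contra hcon
  push_neg at hcon
  obtain ⟨w, hw, hwle⟩ := hcon
  set S : Set ℝ := {z | z ∈ Set.Ioo z₀ 1 ∧ ρ z ≤ ω z} with hSdef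
  have hSne : S.Nonempty := ⟨w, hw, hwle⟩
  have hSbdd : BddAbove S := ⟨1, fun s hs => hs.1.2.le⟩
  set x_c : ℝ := sSup S with hxdef
  have hxw : w ≤ x_c := le_csSup hSbdd ⟨hw, hwle⟩
  have hxc1 : x_c ≤ c₁ := by
    apply csSup_le hSne
    intro s hs
    by_contra hgt
    push_neg at hgt
    have := hfpos1 s ⟨hgt, hs.1.2⟩
    linarith [hs.2]
  have hxcI : x_c ∈ Set.Ioo z₀ 1 := ⟨lt_of_lt_of_le hw.1 hxw, lt_of_le_of_lt hxc1 hc₁1⟩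
  have hx0 : 0 < x_c := lt_of_le_of_lt hz₀0 hxcI.1
  obtain ⟨hρdx, hωdx, -⟩ := hdiff x_c hxcI
  have hfcx : ContinuousAt (fun t => ρ t - ω t) x_c := hρdx.continuousAt.sub hωdx.continuousAt
  have hωcx : ContinuousAt ω x_c := hωdx.continuousAt
  have hfxpos : ∀ z ∈ Set.Ioo x_c 1, 0 < ρ z - ω z := by
    intro z hz
    have hzn : z ∉ S := fun hzS => absurd (le_csSup hSbdd hzS) (not_le.mpr hz.1)
    have hzI : z ∈ Set.Ioo z₀ 1 := ⟨lt_trans hxcI.1 hz.1, hz.2⟩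
    by_contra hle
    push_neg at hle
    exact hzn ⟨hzI, by linarith⟩
  have hfxc_le : ρ x_c - ω x_c ≤ 0 := by
    by_contra hpos
    push_neg at hpos
    have ev : ∀ᶠ z in 𝓝 x_c, 0 < ρ z - ω z := hfcx.eventually (eventually_gt_nhds hpos)
    rw [Metric.eventually_nhds_iff] at ev
    obtain ⟨η, hη, hev⟩ := ev
    obtain ⟨s, hsS, hs⟩ := exists_lt_of_lt_csSup hSne (show x_c - η < x_c by linarith)
    have hsx : s ≤ x_c := le_csSup hSbdd hsS
    have : 0 < ρ s - ω s := hev (by rw [Real.dist_eq, abs_lt]; constructor <;> linarith)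
    linarith [hsS.2]
  have hfxc_ge : 0 ≤ ρ x_c - ω x_c := by
    apply le_of_right_lim hfcx
    filter_upwards [Ioo_mem_nhdsGT_of_mem ⟨le_refl x_c, hxcI.2⟩] with z hz
    exact (hfxpos z hz).le
  have hfxc : ρ x_c = ω x_c := by linarith
  obtain ⟨hdρ0, hdω0⟩ := lp_cross_deriv h hxcI hfxc
  have hfdx : HasDerivAt (fun t => ρ t - ω t) (-((1 - 3*ω x_c)/x_c)) x_c := by
    have := (hρdx.hasDerivAt).sub (hωdx.hasDerivAt)
    rw [hdρ0, hdω0] at this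
    refine this.congr_deriv ?_
    ring
  have hfxc0 : ρ x_c - ω x_c = 0 := by rw [hfxc]; ring
  rcases lt_trichotomy (ω x_c) (1/3) with hlt | heq | hgt
  · -- ω x_c < 1/3 : f has negative derivative at x_c, yet x_c is a min from the right
    have hcneg : -((1 - 3*ω x_c)/x_c) < 0 := by
      have : 0 < (1 - 3*ω x_c)/x_c := div_pos (by linarith) hx0
      linarith
    have hmin : ∀ᶠ z in 𝓝[>] x_c, ρ x_c - ω x_c ≤ ρ z - ω z := by
      filter_upwards [Ioo_mem_nhdsGT_of_mem ⟨le_refl x_c, hxcI.2⟩] with z hz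
      have := hfxpos z hz
      linarith [hfxc0]
    have := deriv_nonneg_of_min_right hfdx hmin
    linarith
  · -- ω x_c = 1/3 : Gronwall uniqueness forces ρ = ω to the right, contradiction
    set q : ℝ := (x_c + 1)/2 with hqdef
    have hq1 : x_c < q := by rw [hqdef]; linarith [hxcI.2]
    have hq2 : q < 1 := by rw [hqdef]; linarith [hxcI.2]
    have := lp_gronwall hz₀0 h hxcI.1 hq1 hq2 hfxc heq q ⟨hq1.le, le_refl q⟩
    have := hfxpos q ⟨hq1, hq2⟩
    linarith
  · -- ω x_c > 1/3
    have hfd_pos : 0 < -((1 - 3*ω x_c)/x_c) := by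
      have : (1 - 3*ω x_c)/x_c < 0 := div_neg_of_neg_of_pos (by linarith) hx0
      linarith
    -- C1 : ω > 1/3 on [x_c, 1)
    have hC1 : ∀ z ∈ Set.Ico x_c 1, 1/3 < ω z := by
      by_contra hcon1
      push_neg at hcon1
      obtain ⟨v, hv, hvle⟩ := hcon1
      set T : Set ℝ := {z | z ∈ Set.Ico x_c 1 ∧ ω z ≤ 1/3} with hTdef
      have hTne : T.Nonempty := ⟨v, hv, hvle⟩
      have hTbdd : BddBelow T := ⟨x_c, fun s hs => hs.1.1⟩
      set z₂ : ℝ := sInf T with hz₂def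
      have hz₂v : z₂ ≤ v := csInf_le hTbdd ⟨hv, hvle⟩
      have hz₂x : x_c ≤ z₂ := le_csInf hTne fun s hs => hs.1.1
      have hz₂1 : z₂ < 1 := lt_of_le_of_lt hz₂v hv.2
      have hz₂x' : x_c < z₂ := by
        have ev := hωcx.eventually (eventually_gt_nhds hgt)
        rw [Metric.eventually_nhds_iff] at ev
        obtain ⟨η, hη, hev⟩ := ev
        have hbd : x_c + η ≤ z₂ := by
          apply le_csInf hTne
          intro s hs
          by_contra hslt
          push_neg at hslt
          have : 1/3 < ω s := hev (by
            rw [Real.dist_eq, abs_lt]; constructor <;> [linarith [hs.1.1]; linarith [hs.1.1]])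
          linarith [hs.2]
        linarith
      have hz₂I : z₂ ∈ Set.Ioo z₀ 1 := ⟨lt_of_lt_of_le hxcI.1 hz₂x, hz₂1⟩
      obtain ⟨hρd2, hωd2, -⟩ := hdiff z₂ hz₂I
      have hωcz₂ : ContinuousAt ω z₂ := hωd2.continuousAt
      have hle : ω z₂ ≤ 1/3 := by
        by_contra hgt2
        push_neg at hgt2
        have ev := hωcz₂.eventually (eventually_gt_nhds hgt2)
        rw [Metric.eventually_nhds_iff] at ev
        obtain ⟨η, hη, hev⟩ := ev
        obtain ⟨s, hsT, hs⟩ := exists_lt_of_csInf_lt hTne (show z₂ < z₂ + η by linarith)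
        have hs2 : z₂ ≤ s := csInf_le hTbdd hsT
        have : 1/3 < ω s := hev (by rw [Real.dist_eq, abs_lt]; constructor <;> linarith)
        linarith [hsT.2]
      have hleft : ∀ z ∈ Set.Ico x_c z₂, 1/3 < ω z := by
        intro z hz
        by_contra hle2
        push_neg at hle2
        have : z₂ ≤ z := csInf_le hTbdd ⟨⟨hz.1, lt_trans hz.2 hz₂1⟩, hle2⟩
        linarith [hz.2]
      have hωz₂ge : 1/3 ≤ ω z₂ := by
        apply ge_of_left_lim hωcz₂
        filter_upwards [Ioo_mem_nhdsLT_of_mem (show z₂ ∈ Set.Ioc x_c z₂ from ⟨hz₂x', le_refl z₂⟩)] with z hz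
        exact (hleft z ⟨hz.1.le, hz.2⟩).le
      have hωz₂ : ω z₂ = 1/3 := le_antisymm hle hωz₂ge
      have hfz₂ : 0 < ρ z₂ - ω z₂ := hfxpos z₂ ⟨hz₂x', hz₂1⟩
      have hdpos := lp_domega_pos hy2 hz₀0 h hz₂I hωz₂ (by linarith)
      have hder : HasDerivAt ω (deriv ω z₂) z₂ := hωd2.hasDerivAt
      have hnp : deriv ω z₂ ≤ 0 := by
        apply deriv_nonpos_of_min_left hder
        filter_upwards [Ioo_mem_nhdsLT_of_mem (show z₂ ∈ Set.Ioc x_c z₂ from ⟨hz₂x', le_refl z₂⟩)] with z hz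
        rw [hωz₂]
        exact (hleft z ⟨hz.1.le, hz.2⟩).le
      linarith
    rcases eq_or_lt_of_le hy3 with hy3e | hy3l
    · -- y = 3 : ω dips below 1/3 just left of 1, contradicting hC1
      have hωd1' : HasDerivAt ω (1 - 2/y) 1 := by
        have := hωd1.hasDerivAt
        rwa [hdω1] at this
      have hdpos : (0:ℝ) < 1 - 2/y := by rw [hy3e]; norm_num
      have hev := ev_left_lt hωd1' hdpos
      obtain ⟨l', hl', hsub2⟩ := mem_nhdsLT_iff_exists_Ioo_subset.mp hev
      set z' : ℝ := (max l' x_c + 1)/2 with hz'def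
      have hmax1 : max l' x_c < 1 := max_lt hl' hxcI.2
      have hz'l : l' < z' := by
        have := le_max_left l' x_c
        rw [hz'def]; linarith
      have hz'x : x_c < z' := by
        have := le_max_right l' x_c
        rw [hz'def]; linarith
      have hz'1 : z' < 1 := by rw [hz'def]; linarith
      have hω13 : ω 1 = 1/3 := by rw [hω1, hy3e]
      have := hsub2 ⟨hz'l, hz'1⟩
      simp only [Set.mem_setOf_eq] at this
      rw [hω13] at this
      linarith [hC1 z' ⟨hz'x.le, hz'1⟩]
    · -- y < 3
      -- C3 : to the left of x_c, f < 0 and ω > 1/3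
      have hev1 := ev_left_lt hfdx hfd_pos
      have hev2 : ∀ᶠ z in 𝓝[<] x_c, 1/3 < ω z :=
        (hωcx.eventually (eventually_gt_nhds hgt)).filter_mono nhdsWithin_le_nhds
      obtain ⟨l₂, hl₂, hsub3⟩ := mem_nhdsLT_iff_exists_Ioo_subset.mp (hev1.and hev2)
      set l₃ : ℝ := max l₂ z₀ with hl₃def
      have hl₃x : l₃ < x_c := max_lt hl₂ hxcI.1
      have hNear : ∀ z ∈ Set.Ioo l₃ x_c, ρ z - ω z < 0 ∧ 1/3 < ω z := by
        intro z hz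
        have := hsub3 ⟨lt_of_le_of_lt (le_max_left l₂ z₀) hz.1, hz.2⟩
        simp only [Set.mem_setOf_eq] at this
        exact ⟨by linarith [this.1, hfxc0], this.2⟩
      have hC3 : ∀ z ∈ Set.Ioo z₀ x_c, ρ z - ω z < 0 ∧ 1/3 < ω z := by
        by_contra hcon3
        push_neg at hcon3
        obtain ⟨u, hu, hucon⟩ := hcon3
        set U : Set ℝ := {z | z ∈ Set.Ioo z₀ x_c ∧ (0 ≤ ρ z - ω z ∨ ω z ≤ 1/3)} with hUdef
        have huU : u ∈ U := by
          refine ⟨hu, ?_⟩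
          by_cases hfu : ρ u - ω u < 0
          · exact Or.inr (hucon hfu)
          · exact Or.inl (by linarith)
        have hUne : U.Nonempty := ⟨u, huU⟩
        have hUbdd : BddAbove U := ⟨x_c, fun s hs => hs.1.2.le⟩
        set z₃ : ℝ := sSup U with hz₃def
        have hz₃u : u ≤ z₃ := le_csSup hUbdd huU
        have hz₃top : z₃ ≤ l₃ := by
          apply csSup_le hUne
          intro s hs
          by_contra hgt3
          push_neg at hgt3
          have hs' := hNear s ⟨hgt3, hs.1.2⟩
          rcases hs.2 with h' | h'
          · linarith [hs'.1]
          · linarith [hs'.2]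
        have hz₃x : z₃ < x_c := lt_of_le_of_lt hz₃top hl₃x
        have hz₃I : z₃ ∈ Set.Ioo z₀ 1 := ⟨lt_of_lt_of_le hu.1 hz₃u, lt_trans hz₃x hxcI.2⟩
        obtain ⟨hρd3, hωd3, -⟩ := hdiff z₃ hz₃I
        have hfc3 : ContinuousAt (fun t => ρ t - ω t) z₃ :=
          hρd3.continuousAt.sub hωd3.continuousAt
        have hωc3 : ContinuousAt ω z₃ := hωd3.continuousAt
        have hright : ∀ z ∈ Set.Ioo z₃ x_c, ρ z - ω z < 0 ∧ 1/3 < ω z := by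
          intro z hz
          have hzI : z ∈ Set.Ioo z₀ x_c := ⟨lt_trans hz₃I.1 hz.1, hz.2⟩
          have hznU : z ∉ U := fun hzU => absurd (le_csSup hUbdd hzU) (not_le.mpr hz.1)
          have hnp : ¬(0 ≤ ρ z - ω z ∨ ω z ≤ 1/3) := fun hp => hznU ⟨hzI, hp⟩
          push_neg at hnp
          exact ⟨by linarith [hnp.1], by linarith [hnp.2]⟩
        have hmemR : Set.Ioo z₃ x_c ∈ 𝓝[>] z₃ :=
          Ioo_mem_nhdsGT_of_mem ⟨le_refl z₃, hz₃x⟩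
        have hf3le : ρ z₃ - ω z₃ ≤ 0 := by
          apply ge_of_right_lim hfc3
          filter_upwards [hmemR] with z hz
          exact (hright z hz).1.le
        have hω3ge : 1/3 ≤ ω z₃ := by
          apply le_of_right_lim hωc3
          filter_upwards [hmemR] with z hz
          exact (hright z hz).2.le
        have halt : 0 ≤ ρ z₃ - ω z₃ ∨ ω z₃ ≤ 1/3 := by
          by_contra hc
          push_neg at hc
          obtain ⟨hc1, hc2⟩ := hc
          have ev1 : ∀ᶠ z in 𝓝 z₃, ρ z - ω z < 0 ∧ 1/3 < ω z :=
            (hfc3.eventually (eventually_lt_nhds hc1)).and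
              (hωc3.eventually (eventually_gt_nhds hc2))
          rw [Metric.eventually_nhds_iff] at ev1
          obtain ⟨η, hη, hev⟩ := ev1
          obtain ⟨s, hsU, hs⟩ := exists_lt_of_lt_csSup hUne (show z₃ - η < z₃ by linarith)
          have hsz : s ≤ z₃ := le_csSup hUbdd hsU
          have := hev (show dist s z₃ < η by rw [Real.dist_eq, abs_lt]; constructor <;> linarith)
          rcases hsU.2 with h' | h'
          · linarith [this.1]
          · linarith [this.2]
        -- the Gronwall sub-case, used twice
        have hGron : ρ z₃ = ω z₃ → ω z₃ = 1/3 → False := by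
          intro hfe hωe
          set q₂ : ℝ := (z₃ + x_c)/2 with hq₂def
          have hq₂1 : z₃ < q₂ := by rw [hq₂def]; linarith
          have hq₂2 : q₂ < x_c := by rw [hq₂def]; linarith
          have := lp_gronwall hz₀0 h hz₃I.1 hq₂1 (lt_trans hq₂2 hxcI.2) hfe hωe q₂
            ⟨hq₂1.le, le_refl q₂⟩
          have := (hright q₂ ⟨hq₂1, hq₂2⟩).1
          linarith
        rcases halt with h0 | hω13'
        · have hf30 : ρ z₃ = ω z₃ := by linarith
          rcases eq_or_lt_of_le hω3ge with hωe | hωl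
          · exact hGron hf30 hωe.symm
          · -- f z₃ = 0, ω z₃ > 1/3 : f decreasing right is impossible
            obtain ⟨hdρ3, hdω3⟩ := lp_cross_deriv h hz₃I hf30
            have hfd3 : HasDerivAt (fun t => ρ t - ω t) (-((1 - 3*ω z₃)/z₃)) z₃ := by
              have := (hρd3.hasDerivAt).sub (hωd3.hasDerivAt)
              rw [hdρ3, hdω3] at this
              refine this.congr_deriv ?_
              ring
            have hz₃0 : 0 < z₃ := lt_of_le_of_lt hz₀0 hz₃I.1
            have hpos3 : 0 < -((1 - 3*ω z₃)/z₃) := by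
              have : (1 - 3*ω z₃)/z₃ < 0 := div_neg_of_neg_of_pos (by linarith) hz₃0
              linarith
            have hmax : ∀ᶠ z in 𝓝[>] z₃, ρ z - ω z ≤ ρ z₃ - ω z₃ := by
              filter_upwards [hmemR] with z hz
              have := (hright z hz).1
              have h30 : ρ z₃ - ω z₃ = 0 := by rw [hf30]; ring
              linarith
            have := deriv_nonpos_of_max_right hfd3 hmax
            linarith
        · have hω3eq : ω z₃ = 1/3 := le_antisymm hω13' hω3ge
          rcases lt_or_eq_of_le hf3le with hf3lt | hf3eq
          · -- ρ z₃ < ω z₃, ω z₃ = 1/3 : deriv ω z₃ < 0 but ω is min from right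
            have hdneg := lp_domega_neg hy2 hz₀0 h hz₃I hω3eq (by linarith)
            have hder : HasDerivAt ω (deriv ω z₃) z₃ := hωd3.hasDerivAt
            have hnn : 0 ≤ deriv ω z₃ := by
              apply deriv_nonneg_of_min_right hder
              filter_upwards [hmemR] with z hz
              rw [hω3eq]
              exact (hright z hz).2.le
            linarith
          · exact hGron (by linarith) hω3eq
      -- C4 : ω is larger than ω x_c on (z₀, x_c)
      have hC4 : ∀ z ∈ Set.Ioo z₀ x_c, ω x_c < ω z := by
        intro z hz
        have hanti : StrictAntiOn ω (Set.Icc z x_c) := by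
          apply strictAntiOn_of_deriv_neg (convex_Icc _ _)
          · exact hωc.mono fun t ht => ⟨lt_of_lt_of_le hz.1 ht.1, le_trans ht.2 hxcI.2.le⟩
          · intro t ht
            rw [interior_Icc] at ht
            have htI : t ∈ Set.Ioo z₀ x_c := ⟨lt_trans hz.1 ht.1, ht.2⟩
            have htI1 : t ∈ Set.Ioo z₀ 1 := ⟨htI.1, lt_trans ht.2 hxcI.2⟩
            obtain ⟨hft, hωt⟩ := hC3 t htI
            obtain ⟨-, -, hE⟩ := hdiff t htI1
            obtain ⟨-, hE2⟩ := hE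
            have hD := hsub t htI1
            have ht0 : 0 < t := lt_of_le_of_lt hz₀0 htI1.1
            rw [hE2]
            have h1 : (1 - 3*ω t)/t < 0 := div_neg_of_neg_of_pos (by linarith) ht0
            have h2 : 2*y^2*t*(ω t)^2*(ρ t - ω t)/(1 - y^2*t^2*(ω t)^2) ≤ 0 := by
              apply div_nonpos_of_nonpos_of_nonneg _ hD.le
              have hnn : (0:ℝ) ≤ 2*y^2*t*(ω t)^2 := by positivity
              exact mul_nonpos_of_nonneg_of_nonpos hnn hft.le
            linarith
        exact hanti ⟨le_refl z, hz.2.le⟩ ⟨hz.2.le, le_refl x_c⟩ hz.2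
      -- C5 : minimum of ω on [x_c, 1]
      have hsubIcc : Set.Icc x_c 1 ⊆ Set.Ioc z₀ 1 := fun t ht =>
        ⟨lt_of_lt_of_le hxcI.1 ht.1, ht.2⟩
      obtain ⟨m_pt, hm_mem, hm_min⟩ := isCompact_Icc.exists_isMinOn
        (Set.nonempty_Icc.mpr hxcI.2.le) (hωc.mono hsubIcc)
      have hm_min' : ∀ x ∈ Set.Icc x_c 1, ω m_pt ≤ ω x := fun x hx => hm_min hx
      have hm13 : 1/3 < ω m_pt := by
        rcases eq_or_lt_of_le hm_mem.2 with h1e | h1l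
        · rw [h1e, hω1]
          rw [div_lt_div_iff₀] <;> linarith
        · exact hC1 m_pt ⟨hm_mem.1, h1l⟩
      -- C6 : contradiction with the infimum hypothesis
      obtain ⟨z', hz'I, hz'lt⟩ := Hinf (ω m_pt - 1/3) (by linarith)
      have hz'lt' : ω z' < ω m_pt := by linarith
      rcases lt_or_ge z' x_c with hcase | hcase
      · have hgt' := hC4 z' ⟨hz'I.1, hcase⟩
        have hxm : ω m_pt ≤ ω x_c := hm_min' x_c ⟨le_refl x_c, hxcI.2.le⟩
        linarith
      · have := hm_min' z' ⟨hcase, hz'I.2.le⟩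
        linarith



set_option maxHeartbeats 800000 in
/-- (a) If the infimum of `ω` on `(z₀,1)` is at most `1/3`, then `ρ > ω` there.
(b) If moreover `ω` first reaches `1/3` at `z₁`, then `ω < 1/3` on `(z₀, z₁)`. -/
theorem inner_solution_below_friedman
    (y z₀ : ℝ) (hy : y ∈ Set.Icc (2 : ℝ) 3) (hz₀ : z₀ ∈ Set.Ico (0 : ℝ) 1)
    (ρ ω : ℝ → ℝ) (h : InnerLPSol y z₀ ρ ω) :
    ((∀ ε : ℝ, 0 < ε → ∃ z ∈ Set.Ioo z₀ 1, ω z < 1 / 3 + ε) →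
      ∀ z ∈ Set.Ioo z₀ 1, ω z < ρ z) ∧
    ((∀ ε : ℝ, 0 < ε → ∃ z ∈ Set.Ioo z₀ 1, ω z < 1 / 3 + ε) →
      ∀ z₁ ∈ Set.Ioo z₀ 1, ω z₁ = 1 / 3 →
        (∀ z ∈ Set.Ioo z₁ 1, 1 / 3 < ω z) →
        ∀ z ∈ Set.Ioo z₀ z₁, ω z < 1 / 3) := by
  constructor
  · intro Hinf z hz
    exact lp_partA hy hz₀ h Hinf z hz
  · intro Hinf z₁ hz₁ hω₁ _ z hz
    have hA := lp_partA hy hz₀ h Hinf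
    obtain ⟨hy2, hy3⟩ := hy
    obtain ⟨hz₀0, hz₀1⟩ := hz₀
    obtain ⟨-, -, -, -, -, -, -, hdiff, -⟩ := id h
    have hd₁ := lp_domega_pos hy2 hz₀0 h hz₁ hω₁ (hA z₁ hz₁)
    obtain ⟨-, hωd₁, -⟩ := hdiff z₁ hz₁
    have hder₁ : HasDerivAt ω (deriv ω z₁) z₁ := hωd₁.hasDerivAt
    have hev := ev_left_lt hder₁ hd₁
    obtain ⟨l, hl, hsubB⟩ := mem_nhdsLT_iff_exists_Ioo_subset.mp hev
    set l' : ℝ := max l z₀ with hl'def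
    have hl' : l' < z₁ := max_lt hl hz₁.1
    have hNear : ∀ t ∈ Set.Ioo l' z₁, ω t < 1/3 := by
      intro t ht
      have := hsubB ⟨lt_of_le_of_lt (le_max_left _ _) ht.1, ht.2⟩
      simp only [Set.mem_setOf_eq] at this
      rw [hω₁] at this
      linarith
    by_contra hge
    push_neg at hge
    set V : Set ℝ := {t | t ∈ Set.Ioo z₀ z₁ ∧ 1/3 ≤ ω t} with hVdef
    have hVne : V.Nonempty := ⟨z, ⟨hz.1, hz.2⟩, by linarith⟩
    have hVbdd : BddAbove V := ⟨z₁, fun s hs => hs.1.2.le⟩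
    set z₂ : ℝ := sSup V with hz₂def
    have hz₂z : z ≤ z₂ := le_csSup hVbdd ⟨⟨hz.1, hz.2⟩, by linarith⟩
    have hz₂l : z₂ ≤ l' := by
      apply csSup_le hVne
      intro s hs
      by_contra hgt2
      push_neg at hgt2
      exact absurd hs.2 (not_le.mpr (hNear s ⟨hgt2, hs.1.2⟩))
    have hz₂1 : z₂ < z₁ := lt_of_le_of_lt hz₂l hl'
    have hz₂I : z₂ ∈ Set.Ioo z₀ 1 := ⟨lt_of_lt_of_le hz.1 hz₂z, lt_trans hz₂1 hz₁.2⟩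
    obtain ⟨-, hωd₂, -⟩ := hdiff z₂ hz₂I
    have hωc₂ : ContinuousAt ω z₂ := hωd₂.continuousAt
    have hge₂ : 1/3 ≤ ω z₂ := by
      by_contra hlt₂
      push_neg at hlt₂
      have ev := hωc₂.eventually (eventually_lt_nhds hlt₂)
      rw [Metric.eventually_nhds_iff] at ev
      obtain ⟨η, hη, hev2⟩ := ev
      obtain ⟨s, hsV, hs⟩ := exists_lt_of_lt_csSup hVne (show z₂ - η < z₂ by linarith)
      have hsz : s ≤ z₂ := le_csSup hVbdd hsV
      have := hev2 (show dist s z₂ < η by rw [Real.dist_eq, abs_lt]; constructor <;> linarith)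
      linarith [hsV.2]
    have hright : ∀ t ∈ Set.Ioo z₂ z₁, ω t < 1/3 := by
      intro t ht
      have htI : t ∈ Set.Ioo z₀ z₁ := ⟨lt_trans hz₂I.1 ht.1, ht.2⟩
      by_contra hge3
      push_neg at hge3
      exact absurd (le_csSup hVbdd ⟨htI, hge3⟩) (not_le.mpr ht.1)
    have hle₂ : ω z₂ ≤ 1/3 := by
      apply ge_of_right_lim hωc₂
      filter_upwards [Ioo_mem_nhdsGT_of_mem ⟨le_refl z₂, hz₂1⟩] with t ht
      exact (hright t ht).le
    have hω₂ : ω z₂ = 1/3 := le_antisymm hle₂ hge₂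
    have hd₂ := lp_domega_pos hy2 hz₀0 h hz₂I hω₂ (hA z₂ hz₂I)
    have hder₂ : HasDerivAt ω (deriv ω z₂) z₂ := hωd₂.hasDerivAt
    have hnp : deriv ω z₂ ≤ 0 := by
      apply deriv_nonpos_of_max_right hder₂
      filter_upwards [Ioo_mem_nhdsGT_of_mem ⟨le_refl z₂, hz₂1⟩] with t ht
      rw [hω₂]
      exact (hright t ht).le
    linarith
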